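/- Let G be a bi-orderable group and let B be the free abelian group on the set of elements of G, with basis {b_g}_{g∈G}. Let G act on B by g · Σⱼ tⱼ b_{gⱼ} = Σⱼ tⱼ b_{ggⱼ}. Then the semidirect product B ⋊ G is bi-orderable. -/

import Mathlib

open Pointwise

/-- `Q` is the positive cone of a bi-ordering of `H`. -/
def IsBiOrderCone {H : Type*} [Group H] (Q : Set H) : Prop :=
  (∀ a ∈ Q, ∀ b ∈ Q, a * b ∈ Q) ∧
  Q ∪ Q⁻¹ = ({1} : Set H)ᶜ ∧
  Disjoint Q Q⁻¹ ∧
  (∀ h : H, ∀ q ∈ Q, h * q * h⁻¹ ∈ Q)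

theorem aux14 (G : Type*) [Group G] [LinearOrder G]
    (hlt : ∀ a b c : G, a < b → c * a < c * b)
    (hrt : ∀ a b c : G, a < b → a * c < b * c)
    (φ : G →* MulAut (Multiplicative (G →₀ ℤ)))
    (hφ : ∀ (g : G) (b : G →₀ ℤ),
      φ g (Multiplicative.ofAdd b) =
        Multiplicative.ofAdd (Finsupp.mapDomain (fun x => g * x) b)) :
    ∃ P : Set (Multiplicative (G →₀ ℤ) ⋊[φ] G), IsBiOrderCone P := by
  classical
  -- toAdd form of hφ
  have hφ' : ∀ (g : G) (m : Multiplicative (G →₀ ℤ)),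
      Multiplicative.toAdd (φ g m) = Finsupp.mapDomain (fun x => g * x) m.toAdd := by
    intro g m
    have := hφ g m.toAdd
    simpa using congrArg Multiplicative.toAdd this
  -- mapDomain preserves positivity in Lex order
  have hmap : ∀ (g : G) (x : G →₀ ℤ), 0 < toLex x →
      0 < toLex (Finsupp.mapDomain (fun y => g * y) x) := by
    intro g x hx
    have hco : (fun y => g * y) = ⇑(Equiv.mulLeft g) := rfl
    have hme : Finsupp.mapDomain (fun y => g * y) x
        = Finsupp.equivMapDomain (Equiv.mulLeft g) x := by
      rw [hco, Finsupp.equivMapDomain_eq_mapDomain]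
    obtain ⟨i, h1, h2⟩ := hx
    rw [hme]
    refine ⟨g * i, fun j hj => ?_, ?_⟩
    · have : g⁻¹ * j < i := by
        have := hlt _ _ g⁻¹ hj
        simpa using this
      have := h1 _ this
      simpa [Finsupp.equivMapDomain_apply] using this
    · simpa [Finsupp.equivMapDomain_apply] using h2
  -- basic order facts on G
  have posmul : ∀ g h : G, 1 < g → 1 < h → 1 < g * h := by
    intro g h hg hh
    have h1 : (1:G) * h < g * h := hrt _ _ h hg
    have h2 : (1:G) < 1 * h := by simpa using hh
    exact lt_trans h2 h1
  have posconj : ∀ k g : G, 1 < g → 1 < k * g * k⁻¹ := by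
    intro k g hg
    have h1 : k * 1 < k * g := hlt _ _ k hg
    have h2 : k * 1 * k⁻¹ < k * g * k⁻¹ := hrt _ _ k⁻¹ h1
    simpa using h2
  have posinv : ∀ g : G, g < 1 → 1 < g⁻¹ := by
    intro g hg
    have := hlt _ _ g⁻¹ hg
    simpa using this
  have notboth : ∀ g : G, 1 < g → ¬ (1 < g⁻¹) := by
    intro g hg hg'
    have := posmul _ _ hg hg'
    simp at this
  -- facts about Lex positivity
  have lexadd : ∀ x y : G →₀ ℤ, 0 < toLex x → 0 < toLex y → 0 < toLex (x + y) := by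
    intro x y hx hy
    have : toLex (x + y) = toLex x + toLex y := rfl
    rw [this]
    exact add_pos hx hy
  have lexneg : ∀ x : G →₀ ℤ, toLex x < 0 → 0 < toLex (-x) := by
    intro x hx
    have : toLex (-x) = -toLex x := rfl
    rw [this]
    exact neg_pos.mpr hx
  have lexnotboth : ∀ x : G →₀ ℤ, 0 < toLex x → ¬ (0 < toLex (-x)) := by
    intro x hx hx'
    have h : toLex (-x) = -toLex x := rfl
    rw [h] at hx'
    exact absurd hx (not_lt.mpr (le_of_lt (neg_pos.mp hx')))
  refine ⟨{p | 1 < p.right ∨ (p.right = 1 ∧ 0 < toLex (Multiplicative.toAdd p.left))},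
    ?_, ?_, ?_, ?_⟩
  · -- closed under multiplication
    rintro a (ha | ⟨ha1, ha2⟩) b (hb | ⟨hb1, hb2⟩)
    · exact Or.inl (by rw [SemidirectProduct.mul_right]; exact posmul _ _ ha hb)
    · exact Or.inl (by rw [SemidirectProduct.mul_right, hb1, mul_one]; exact ha)
    · exact Or.inl (by rw [SemidirectProduct.mul_right, ha1, one_mul]; exact hb)
    · refine Or.inr ⟨by rw [SemidirectProduct.mul_right, ha1, hb1, mul_one], ?_⟩
      rw [SemidirectProduct.mul_left, ha1]
      have h1 : φ (1:G) b.left = b.left := by simp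
      rw [h1, toAdd_mul]
      exact lexadd _ _ ha2 hb2
  · -- union
    ext p
    simp only [Set.mem_union, Set.mem_inv, Set.mem_setOf_eq, Set.mem_compl_iff,
      Set.mem_singleton_iff]
    constructor
    · rintro (h | h) hp1
      · subst hp1
        rcases h with h | ⟨_, h⟩
        · simp at h
        · simp at h
      · subst hp1
        rcases h with h | ⟨_, h⟩
        · simp at h
        · simp at h
    · intro hp
      rcases lt_trichotomy (1:G) p.right with h | h | h
      · exact Or.inl (Or.inl h)
      · -- p.right = 1
        have hleft : p.left ≠ 1 := by
          intro h'
          exact hp (SemidirectProduct.ext h' h.symm)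
        have hx : Multiplicative.toAdd p.left ≠ 0 := by
          simpa using hleft
        rcases lt_trichotomy (0 : Lex (G →₀ ℤ)) (toLex (Multiplicative.toAdd p.left)) with
          h2 | h2 | h2
        · exact Or.inl (Or.inr ⟨h.symm, h2⟩)
        · exact absurd (toLex.injective h2.symm) hx
        · refine Or.inr (Or.inr ⟨by rw [SemidirectProduct.inv_right, ← h, inv_one], ?_⟩)
          have hl : (p⁻¹).left = p.left⁻¹ := by
            rw [SemidirectProduct.inv_left, ← h, inv_one, map_one]
            rfl
          rw [hl]
          have : Multiplicative.toAdd p.left⁻¹ = -(Multiplicative.toAdd p.left) := rfl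
          rw [this]
          exact lexneg _ h2
      · refine Or.inr (Or.inl ?_)
        rw [SemidirectProduct.inv_right]
        exact posinv _ h
  · -- disjoint
    rw [Set.disjoint_left]
    rintro p (hp | ⟨hp1, hp2⟩) hq
    · rw [Set.mem_inv] at hq
      rcases hq with hq | ⟨hq1, hq2⟩
      · rw [SemidirectProduct.inv_right] at hq
        exact notboth _ hp hq
      · rw [SemidirectProduct.inv_right, inv_eq_one] at hq1
        rw [hq1] at hp; simp at hp
    · rw [Set.mem_inv] at hq
      rcases hq with hq | ⟨hq1, hq2⟩
      · rw [SemidirectProduct.inv_right, hp1, inv_one] at hq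
        simp at hq
      · have hl : (p⁻¹).left = p.left⁻¹ := by
          rw [SemidirectProduct.inv_left, hp1, inv_one, map_one]
          rfl
        rw [hl] at hq2
        have : Multiplicative.toAdd p.left⁻¹ = -(Multiplicative.toAdd p.left) := rfl
        rw [this] at hq2
        exact lexnotboth _ hp2 hq2
  · -- conjugation invariance
    rintro h q (hq | ⟨hq1, hq2⟩)
    · refine Or.inl ?_
      simp only [SemidirectProduct.mul_right, SemidirectProduct.inv_right]
      exact posconj _ _ hq
    · refine Or.inr ⟨by simp [SemidirectProduct.mul_right, SemidirectProduct.inv_right, hq1], ?_⟩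
      have hl : (h * q * h⁻¹).left = h.left * φ h.right q.left * h.left⁻¹ := by
        simp only [SemidirectProduct.mul_left, SemidirectProduct.inv_left,
          SemidirectProduct.mul_right, SemidirectProduct.inv_right, hq1, mul_one]
        congr 1
        rw [← MulAut.mul_apply, ← map_mul, mul_inv_cancel, map_one, MulAut.one_apply]
      rw [hl, mul_comm, ← mul_assoc, inv_mul_cancel, one_mul]
      rw [hφ' h.right q.left]
      exact hmap _ _ hq2

/-- Let `G` be a bi-orderable group and let `B = G →₀ ℤ` be the free
abelian group on the elements of `G`, with `G` acting on `B` by shifting indices: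
`g · Σ tⱼ b_{gⱼ} = Σ tⱼ b_{g gⱼ}` (i.e. `mapDomain (g * ·)`).  Then the semidirect
product `B ⋊ G` is bi-orderable. -/
theorem stmt14 (G : Type*) [Group G]
    (hG : ∃ PG : Set G, IsBiOrderCone PG)
    (φ : G →* MulAut (Multiplicative (G →₀ ℤ)))
    (hφ : ∀ (g : G) (b : G →₀ ℤ),
      φ g (Multiplicative.ofAdd b) =
        Multiplicative.ofAdd (Finsupp.mapDomain (fun x => g * x) b)) :
    ∃ P : Set (Multiplicative (G →₀ ℤ) ⋊[φ] G), IsBiOrderCone P := by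
  classical
  obtain ⟨PG, hmul, hunion, hdisj, hconj⟩ := hG
  have hone : (1:G) ∉ PG := by
    intro h
    have : (1:G) ∈ PG ∪ PG⁻¹ := Or.inl h
    rw [hunion] at this
    simp at this
  have hnb : ∀ g : G, g ∈ PG → g⁻¹ ∉ PG := by
    intro g hg hg'
    exact Set.disjoint_left.mp hdisj hg (by simpa [Set.mem_inv] using hg')
  have htot : ∀ g : G, g ≠ 1 → g ∈ PG ∨ g⁻¹ ∈ PG := by
    intro g hg
    have : g ∈ PG ∪ PG⁻¹ := by rw [hunion]; simpa using hg
    rcases this with h | h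
    · exact Or.inl h
    · exact Or.inr (by simpa [Set.mem_inv] using h)
  letI : LinearOrder G := {
    le := fun x y => x = y ∨ x⁻¹ * y ∈ PG
    lt := fun x y => x⁻¹ * y ∈ PG
    le_refl := fun x => Or.inl rfl
    le_trans := by
      rintro a b c (rfl | hab) hbc
      · exact hbc
      · rcases hbc with rfl | hbc
        · exact Or.inr hab
        · refine Or.inr ?_
          have := hmul _ hab _ hbc
          simpa [mul_assoc] using this
    le_antisymm := by
      rintro a b (rfl | hab) hba
      · rfl
      · rcases hba with rfl | hba
        · rfl
        · exfalso
          exact hnb _ hab (by simpa using hba)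
    le_total := by
      intro a b
      by_cases hab : a = b
      · exact Or.inl (Or.inl hab)
      · rcases htot (a⁻¹ * b) (by simpa [inv_mul_eq_one] using hab) with h | h
        · exact Or.inl (Or.inr h)
        · exact Or.inr (Or.inr (by simpa using h))
    lt_iff_le_not_ge := by
      intro a b
      constructor
      · intro h
        refine ⟨Or.inr h, ?_⟩
        rintro (rfl | h')
        · exact hone (by simpa using h)
        · exact hnb _ h (by simpa using h')
      · rintro ⟨(rfl | h), h2⟩
        · exact absurd (Or.inl rfl) h2
        · exact h
    toDecidableLE := fun _ _ => Classical.dec _ }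
  have hlt : ∀ a b c : G, a < b → c * a < c * b := by
    intro a b c hab
    show (c * a)⁻¹ * (c * b) ∈ PG
    have : (c * a)⁻¹ * (c * b) = a⁻¹ * b := by group
    rw [this]; exact hab
  have hrt : ∀ a b c : G, a < b → a * c < b * c := by
    intro a b c hab
    show (a * c)⁻¹ * (b * c) ∈ PG
    have : (a * c)⁻¹ * (b * c) = c⁻¹ * (a⁻¹ * b) * c⁻¹⁻¹ := by group
    rw [this]
    exact hconj _ _ hab
  exact aux14 G hlt hrt φ hφ
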